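/- Fix n ∈ ℕ, strictly increasing sigmoids σ_1, …, σ_n : ℝ → ℝ, a vector x̄₂ ∈ ℝⁿ with positive components, a point z₁d ∈ ℝⁿ, and ℓ > 0. Define V : ℝⁿ × ℝⁿ → ℝ by V(z₁, z₂) = (1/2)‖z₁ − z₁d‖² + Σ_{i=1}^n 𝒱_i((z₂)_i / (x̄₂)_i), where 𝒱_i(ζ) = ∫_0^ζ σ_i(s) ds. Then the sublevel set Ω = {(z₁, z₂) ∈ ℝⁿ × ℝⁿ : V(z₁, z₂) ≤ ℓ} is bounded. -/
import Mathlib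

open intervalIntegral MeasureTheory Filter

private lemma sig_int_even (σ : ℝ → ℝ) (hodd : ∀ x, σ (-x) = -σ x) (ζ : ℝ) :
    (∫ s in (0:ℝ)..(-ζ), σ s) = ∫ s in (0:ℝ)..ζ, σ s := by
  have h1 : (∫ x in (0:ℝ)..ζ, σ (-x)) = ∫ x in (-ζ)..(0:ℝ), σ x := by
    simpa using intervalIntegral.integral_comp_neg (a := (0:ℝ)) (b := ζ) σ
  have h2 : (∫ x in (0:ℝ)..ζ, σ (-x)) = -∫ x in (0:ℝ)..ζ, σ x := by
    simp [hodd]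
  have h3 : (∫ x in (-ζ)..(0:ℝ), σ x) = -∫ x in (0:ℝ)..(-ζ), σ x :=
    intervalIntegral.integral_symm 0 (-ζ)
  linarith

private lemma sig_int_nonneg (σ : ℝ → ℝ) (hmono : StrictMono σ) (h0 : σ 0 = 0)
    (hodd : ∀ x, σ (-x) = -σ x) (ζ : ℝ) : 0 ≤ ∫ s in (0:ℝ)..ζ, σ s := by
  have key : ∀ ζ' : ℝ, 0 ≤ ζ' → 0 ≤ ∫ s in (0:ℝ)..ζ', σ s := fun ζ' h =>
    intervalIntegral.integral_nonneg h (fun s hs => h0 ▸ hmono.monotone hs.1)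
  rcases le_or_gt 0 ζ with h | h
  · exact key ζ h
  · have := sig_int_even σ hodd (-ζ)
    rw [neg_neg] at this
    rw [this]
    exact key (-ζ) (by linarith)

private lemma sig_int_coercive (σ : ℝ → ℝ) (hcont : Continuous σ) (hmono : StrictMono σ)
    (h0 : σ 0 = 0) (hodd : ∀ x, σ (-x) = -σ x) (hlim : Tendsto σ atTop (nhds 1))
    (ℓ : ℝ) (hℓ : 0 < ℓ) :
    ∃ C, 0 < C ∧ ∀ ζ, (∫ s in (0:ℝ)..ζ, σ s) ≤ ℓ → |ζ| ≤ C := by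
  obtain ⟨M, hM⟩ := Filter.eventually_atTop.mp
    (hlim.eventually (eventually_ge_nhds (by norm_num : (1:ℝ)/2 < 1)))
  set M' : ℝ := max M 0 with hM'
  have hM'0 : 0 ≤ M' := le_max_right _ _
  have hMM' : M ≤ M' := le_max_left _ _
  refine ⟨M' + 4*ℓ, by positivity, ?_⟩
  have key : ∀ ζ : ℝ, 0 ≤ ζ → (∫ s in (0:ℝ)..ζ, σ s) ≤ ℓ → ζ ≤ M' + 4*ℓ := by
    intro ζ hζ0 hint
    by_contra hgt
    push_neg at hgt
    have hM'ζ : M' ≤ ζ := by linarith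
    have hsplit : (∫ s in (0:ℝ)..M', σ s) + (∫ s in M'..ζ, σ s)
        = ∫ s in (0:ℝ)..ζ, σ s :=
      intervalIntegral.integral_add_adjacent_intervals
        (hcont.intervalIntegrable _ _) (hcont.intervalIntegrable _ _)
    have h1 : 0 ≤ ∫ s in (0:ℝ)..M', σ s :=
      intervalIntegral.integral_nonneg hM'0 (fun s hs => h0 ▸ hmono.monotone hs.1)
    have h2 : (∫ s in M'..ζ, (1/2 : ℝ)) ≤ ∫ s in M'..ζ, σ s := by
      apply intervalIntegral.integral_mono_on hM'ζ
        (intervalIntegrable_const) (hcont.intervalIntegrable _ _)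
      intro s hs
      exact hM s (le_trans hMM' hs.1)
    have h3 : (∫ s in M'..ζ, (1/2 : ℝ)) = (ζ - M') * (1/2) := by
      simp [intervalIntegral.integral_const, smul_eq_mul]
    nlinarith
  intro ζ hint
  rcases le_or_gt 0 ζ with h | h
  · rw [abs_of_nonneg h]; exact key ζ h hint
  · rw [abs_of_neg h]
    have heven := sig_int_even σ hodd ζ
    exact key (-ζ) (by linarith) (by rw [heven]; exact hint)

/-- The sublevel set `Ω = {(z₁, z₂) : V(z₁,z₂) ≤ ℓ}` of the Lyapunov
candidate `V(z₁,z₂) = ½‖z₁ − z₁d‖² + Σᵢ 𝒱ᵢ((z₂)ᵢ/(x̄₂)ᵢ)`, built from sigmoid integral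
functions of strictly increasing sigmoids, is bounded. -/
theorem lyapunov_sublevel_bounded
    (n : ℕ) (σ : Fin n → ℝ → ℝ)
    (hcont : ∀ i, Continuous (σ i))
    (hmono : ∀ i, StrictMono (σ i))
    (hodd : ∀ i x, σ i (-x) = -σ i x)
    (hlim : ∀ i, Filter.Tendsto (σ i) Filter.atTop (nhds 1))
    (xbar₂ : Fin n → ℝ) (hxbar₂ : ∀ i, 0 < xbar₂ i)
    (z₁d : EuclideanSpace ℝ (Fin n)) (ℓ : ℝ) (hℓ : 0 < ℓ) :
    Bornology.IsBounded
      {p : EuclideanSpace ℝ (Fin n) × EuclideanSpace ℝ (Fin n) |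
        (1 / 2) * ‖p.1 - z₁d‖ ^ 2 +
          ∑ i, ∫ s in (0 : ℝ)..(p.2 i / xbar₂ i), σ i s ≤ ℓ} := by
  have h0 : ∀ i, σ i 0 = 0 := by
    intro i
    have := hodd i 0
    simp at this
    linarith
  choose C hCpos hC using fun i =>
    sig_int_coercive (σ i) (hcont i) (hmono i) (h0 i) (hodd i) (hlim i) ℓ hℓ
  set R₁ : ℝ := Real.sqrt (2*ℓ)
  set R₂ : ℝ := Real.sqrt (∑ i, (xbar₂ i * C i)^2)
  have hsub : {p : EuclideanSpace ℝ (Fin n) × EuclideanSpace ℝ (Fin n) |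
        (1 / 2) * ‖p.1 - z₁d‖ ^ 2 +
          ∑ i, ∫ s in (0 : ℝ)..(p.2 i / xbar₂ i), σ i s ≤ ℓ}
      ⊆ (Metric.closedBall z₁d R₁) ×ˢ (Metric.closedBall 0 R₂) := by
    rintro ⟨z₁, z₂⟩ hp
    simp only [Set.mem_setOf_eq] at hp
    have hterm : ∀ i, 0 ≤ ∫ s in (0:ℝ)..(z₂ i / xbar₂ i), σ i s := fun i =>
      sig_int_nonneg (σ i) (hmono i) (h0 i) (hodd i) _
    have hsum : 0 ≤ ∑ i, ∫ s in (0:ℝ)..(z₂ i / xbar₂ i), σ i s :=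
      Finset.sum_nonneg (fun i _ => hterm i)
    have hnorm1 : ‖z₁ - z₁d‖ ^ 2 ≤ 2*ℓ := by nlinarith
    have hball1 : z₁ ∈ Metric.closedBall z₁d R₁ := by
      rw [Metric.mem_closedBall, dist_eq_norm]
      have h2ℓ : (0:ℝ) ≤ 2*ℓ := by linarith
      nlinarith [Real.sq_sqrt h2ℓ, Real.sqrt_nonneg (2*ℓ), norm_nonneg (z₁ - z₁d),
        abs_nonneg (‖z₁ - z₁d‖)]
    have hℓi : ∀ i, (∫ s in (0:ℝ)..(z₂ i / xbar₂ i), σ i s) ≤ ℓ := by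
      intro i
      have hle : (∫ s in (0:ℝ)..(z₂ i / xbar₂ i), σ i s)
          ≤ ∑ j, ∫ s in (0:ℝ)..(z₂ j / xbar₂ j), σ j s :=
        Finset.single_le_sum (fun j _ => hterm j) (Finset.mem_univ i)
      nlinarith [sq_nonneg ‖z₁ - z₁d‖]
    have hzi : ∀ i, |z₂ i| ≤ xbar₂ i * C i := by
      intro i
      have := hC i _ (hℓi i)
      rw [abs_div, abs_of_pos (hxbar₂ i), div_le_iff₀ (hxbar₂ i)] at this
      linarith [this]
    have hball2 : z₂ ∈ Metric.closedBall (0 : EuclideanSpace ℝ (Fin n)) R₂ := by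
      rw [Metric.mem_closedBall, dist_zero_right, EuclideanSpace.norm_eq]
      apply Real.sqrt_le_sqrt
      apply Finset.sum_le_sum
      intro i _
      rw [Real.norm_eq_abs]
      have h1 : 0 ≤ |z₂ i| := abs_nonneg _
      nlinarith [hzi i]
    exact ⟨hball1, hball2⟩
  exact (Metric.isBounded_closedBall.prod Metric.isBounded_closedBall).subset hsub
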